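/- Define operations f₁,…,f_k on V(H) by the following case analysis (with μ(x,x) := 0): if μ(b,c) > i then fᵢ(a,b,c) = b when μ(a,b) < i and fᵢ(a,b,c) = a when μ(a,b) ≥ i; if μ(b,c) = i then fᵢ(a,b,c) = c when μ(a,c) < i or (μ(a,c) = i and a is not an i-distinguisher of a,b,c), and fᵢ(a,b,c) = a otherwise; if μ(b,c) < i then fᵢ(a,b,c) = c when μ(a,c) < i and fᵢ(a,b,c) = a when μ(a,c) ≥ i. Then f₁,…,f_k satisfy the Hagemann–Mitschke identities: f₁(x,y,y) = x, fᵢ(x,x,y) = f_{i+1}(x,y,y) for all i < k, and f_k(x,x,y) = y, provided 1 ≤ μ(x,y) ≤ k for all distinct x,y. -/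
import Mathlib


namespace DigraphListHom

variable {V W : Type*}

/-- One step of a walk: forward if `dir = true`, backward otherwise. -/
def Step (H : V → V → Prop) (u v : V) (dir : Bool) : Prop :=
  if dir then H u v else H v u

/-- `x` is a walk in `H` with direction pattern `d`. -/
def IsWalk (H : V → V → Prop) {n : ℕ} (d : Fin n → Bool) (x : Fin (n + 1) → V) : Prop :=
  ∀ i : Fin n, Step H (x i.castSucc) (x i.succ) (d i)

/-- `x_i y_{i+1}` is a faithful edge from `X` to `Y` at position `i`. -/
def FaithfulAt (H : V → V → Prop) {n : ℕ} (d : Fin n → Bool) (x y : Fin (n + 1) → V)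
    (i : Fin n) : Prop :=
  Step H (x i.castSucc) (y i.succ) (d i)

/-- `X` avoids `Y`: there is no faithful edge from `X` to `Y`. -/
def Avoids (H : V → V → Prop) {n : ℕ} (d : Fin n → Bool) (x y : Fin (n + 1) → V) : Prop :=
  ∀ i, ¬ FaithfulAt H d x y i

/-- `Z` protects `Y` from `X`: faithful edges `x_i z_{i+1}` and `z_j y_{j+1}` imply `j ≤ i`. -/
def Protects (H : V → V → Prop) {n : ℕ} (d : Fin n → Bool) (x y z : Fin (n + 1) → V) : Prop :=
  ∀ i j : Fin n, FaithfulAt H d x z i → FaithfulAt H d z y j → (j : ℕ) ≤ (i : ℕ)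

/-- `H` contains a circular `N`: congruent walks `X` from `x` to `x`, `Y` from `y` to `y`,
`Z` from `y` to `x`, with `X` avoiding `Y` and `Z` protecting `Y` from `X`. -/
def CircularN (H : V → V → Prop) : Prop :=
  ∃ n : ℕ, 0 < n ∧ ∃ (d : Fin n → Bool) (x y z : Fin (n + 1) → V),
    IsWalk H d x ∧ IsWalk H d y ∧ IsWalk H d z ∧
    x (Fin.last n) = x 0 ∧ y (Fin.last n) = y 0 ∧
    z 0 = y 0 ∧ z (Fin.last n) = x 0 ∧
    Avoids H d x y ∧ Protects H d x y z

/-- Arc relation of the pair digraph `H⁺` (on ambient pairs). -/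
def PairArc (H : V → V → Prop) (p q : V × V) : Prop :=
  (H p.1 q.1 ∧ H p.2 q.2 ∧ ¬ H p.1 q.2) ∨ (H q.1 p.1 ∧ H q.2 p.2 ∧ ¬ H q.2 p.1)

/-- Arc relation of `H⁺` restricted to genuine vertices (pairs of distinct vertices). -/
def PairArcD (H : V → V → Prop) (p q : V × V) : Prop :=
  p.1 ≠ p.2 ∧ q.1 ≠ q.2 ∧ PairArc H p q

/-- Reachability in `H⁺`. -/
def PairReach (H : V → V → Prop) : V × V → V × V → Prop :=
  Relation.ReflTransGen (PairArcD H)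

/-- Mutual reachability in `H⁺` (same strong component). -/
def SameSCC (H : V → V → Prop) (p q : V × V) : Prop :=
  PairReach H p q ∧ PairReach H q p

/-- `C` is a strong component of the digraph with arc relation `R`. -/
def IsStrongComponent {α : Type*} (R : α → α → Prop) (C : Set α) : Prop :=
  ∃ a, C = {b | Relation.ReflTransGen R a b ∧ Relation.ReflTransGen R b a}

/-- There is a directed path with `m` vertices in the condensation of `H⁺`
ending at the strong component of `p`. -/
def CondChain (H : V → V → Prop) (p : V × V) (m : ℕ) : Prop :=
  ∃ r : Fin m → V × V,
    (∀ i, (r i).1 ≠ (r i).2) ∧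
    (∀ i j : Fin m, i < j → PairReach H (r i) (r j) ∧ ¬ PairReach H (r j) (r i)) ∧
    (∀ i, PairReach H (r i) p) ∧
    (∀ h : 0 < m, PairReach H p (r ⟨m - 1, Nat.sub_lt h Nat.one_pos⟩))

/-- `μ(p)`: the maximum number of vertices of a directed path in the condensation of `H⁺`
ending at the strong component of `p` (with `μ(x,x) = 0`). -/
noncomputable def mu (H : V → V → Prop) (p : V × V) : ℕ :=
  sSup {m | CondChain H p m}

/-- The unordered pair `{u, v}` is `k`-allowed with respect to the ordering `ord` of `V(H⁺)`:
neither `(u,v)` nor `(v,u)` is `k`-processed (i.e. has position `> k`). -/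
def KAllowed (ord : V × V → ℕ) (k : ℕ) (u v : V) : Prop :=
  u = v ∨ (ord (u, v) ≤ k ∧ ord (v, u) ≤ k)

/-- `ord` is an ordering of the vertices of `H⁺` listing the strong components
consecutively, in an order in which each component is a sink among the later ones. -/
def GoodOrd (H : V → V → Prop) (ord : V × V → ℕ) : Prop :=
  (∀ p q : V × V, p.1 ≠ p.2 → q.1 ≠ q.2 → ord p = ord q → p = q) ∧
  (∀ p q : V × V, p.1 ≠ p.2 → q.1 ≠ q.2 → PairReach H p q → ¬ PairReach H q p →
    ord p < ord q) ∧
  (∀ p q r : V × V, p.1 ≠ p.2 → q.1 ≠ q.2 → r.1 ≠ r.2 →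
    SameSCC H p q → ord p ≤ ord r → ord r ≤ ord q → SameSCC H p r)

/-- `f` is an `L`-homomorphism of `G` to `H`. -/
def IsLHom (H : V → V → Prop) (G : W → W → Prop) (L : W → Set V) (f : W → V) : Prop :=
  (∀ u v, G u v → H (f u) (f v)) ∧ ∀ w, f w ∈ L w

/-- Arc relation of the triple digraph `Tr(G,L)`. -/
def TrArc (H : V → V → Prop) (G : W → W → Prop) (L : W → Set V)
    (p q : W × V × V) : Prop :=
  p.2.1 ∈ L p.1 ∧ p.2.2 ∈ L p.1 ∧ q.2.1 ∈ L q.1 ∧ q.2.2 ∈ L q.1 ∧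
  G p.1 q.1 ∧ H p.2.1 q.2.1 ∧ H p.2.2 q.2.2 ∧ ¬ H p.2.1 q.2.2 ∧ ¬ H p.2.2 q.2.1

/-- Symmetrization of the triple-digraph arc relation (for weak connectivity). -/
def TrSym (H : V → V → Prop) (G : W → W → Prop) (L : W → Set V)
    (p q : W × V × V) : Prop :=
  TrArc H G L p q ∨ TrArc H G L q p

/-- Weak connectivity in the triple digraph `Tr(G,L)`. -/
def WConn (H : V → V → Prop) (G : W → W → Prop) (L : W → Set V) :
    W × V × V → W × V × V → Prop :=
  Relation.ReflTransGen (TrSym H G L)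

/-- `f` is a ternary polymorphism of `H`. -/
def Polymorphism3 (H : V → V → Prop) (f : V → V → V → V) : Prop :=
  ∀ a a' b b' c c', H a a' → H b b' → H c c' → H (f a b c) (f a' b' c')

/-- `f` is conservative. -/
def Conservative3 (f : V → V → V → V) : Prop :=
  ∀ a b c, f a b c = a ∨ f a b c = b ∨ f a b c = c

/-- `f 1, …, f k` satisfy the Hagemann–Mitschke identities. -/
def HMChain (f : ℕ → V → V → V → V) (k : ℕ) : Prop :=
  (∀ x y, f 1 x y y = x) ∧
  (∀ i, 1 ≤ i → i < k → ∀ x y, f i x x y = f (i + 1) x y y) ∧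
  (∀ x y, f k x x y = y)

/-- `H` contains a pair of independent edges. -/
def IndependentEdges (H : V → V → Prop) : Prop :=
  ∃ a b c d, H a b ∧ H c d ∧ ¬ H a d ∧ ¬ H c b

/-- `H` contains a bicycle. -/
def Bicycle (H : V → V → Prop) : Prop :=
  ∃ n : ℕ, 0 < n ∧ ∃ x y : Fin (n + 1) → V,
    x (Fin.last n) = x 0 ∧ y (Fin.last n) = y 0 ∧
    ∀ i : Fin n, H (x i.castSucc) (x i.succ) ∧ H (y i.castSucc) (y i.succ) ∧
      ¬ H (x i.castSucc) (y i.succ) ∧ H (y i.castSucc) (x i.succ)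

/-- `a` is an `i`-distinguisher of `a, b, c`. -/
def IDist (H : V → V → Prop) (i : ℕ) (a b c : V) : Prop :=
  ∃ (n : ℕ) (d : Fin n → Bool) (X Y Z : Fin (n + 1) → V),
    IsWalk H d X ∧ IsWalk H d Y ∧ IsWalk H d Z ∧
    X 0 = a ∧ Y 0 = b ∧ Z 0 = c ∧
    Y (Fin.last n) = Z (Fin.last n) ∧
    i ≤ mu H (X (Fin.last n), Y (Fin.last n)) ∧
    Avoids H d Y X ∧ Avoids H d Z X


lemma reach_diag {H : V → V → Prop} {x : V} {q : V × V}
    (h : PairReach H (x, x) q) : q = (x, x) := by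
  induction h with
  | refl => rfl
  | tail _ harc ih =>
    subst ih
    exact absurd harc.1 (by simp)

lemma mu_diag (H : V → V → Prop) (x : V) : mu H (x, x) = 0 := by
  have hset : {m | CondChain H (x, x) m} = {0} := by
    ext m
    simp only [Set.mem_setOf_eq, Set.mem_singleton_iff]
    constructor
    · rintro ⟨r, hne, -, -, hlast⟩
      by_contra hm
      have hpos : 0 < m := Nat.pos_of_ne_zero hm
      have := reach_diag (hlast hpos)
      exact hne _ (by rw [this])
    · rintro rfl
      exact ⟨Fin.elim0, fun i => i.elim0, fun i => i.elim0, fun i => i.elim0,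
        fun h => absurd h (by simp)⟩
  rw [mu, hset, csSup_singleton]

lemma not_idist {H : V → V → Prop} {i : ℕ} (hi : 1 ≤ i) (x y : V) :
    ¬ IDist H i x x y := by
  rintro ⟨n, d, X, Y, Z, hX, hY, hZ, hX0, hY0, hZ0, hYZ, hmu', hAvY, hAvZ⟩
  cases n with
  | zero =>
    rw [show (Fin.last 0) = 0 from rfl, hX0, hY0, mu_diag] at hmu'
    omega
  | succ m =>
    have h1 := hX 0
    have h2 := hAvY 0
    simp only [FaithfulAt] at h2
    rw [Fin.castSucc_zero, hY0, ← hX0] at h2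
    rw [Fin.castSucc_zero] at h1
    exact h2 h1

/-- the case-defined operations satisfy the Hagemann–Mitschke identities. -/
theorem statement15 [Fintype V] (H : V → V → Prop) (k : ℕ)
    (f : ℕ → V → V → V → V)
    (hA : ∀ (i : ℕ) (a b c : V), i < mu H (b, c) →
      (mu H (a, b) < i → f i a b c = b) ∧ (i ≤ mu H (a, b) → f i a b c = a))
    (hB : ∀ (i : ℕ) (a b c : V), mu H (b, c) = i →
      ((mu H (a, c) < i ∨ (mu H (a, c) = i ∧ ¬ IDist H i a b c)) → f i a b c = c) ∧
      ((i < mu H (a, c) ∨ (mu H (a, c) = i ∧ IDist H i a b c)) → f i a b c = a))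
    (hC : ∀ (i : ℕ) (a b c : V), mu H (b, c) < i →
      (mu H (a, c) < i → f i a b c = c) ∧ (i ≤ mu H (a, c) → f i a b c = a))
    (hmu : ∀ x y : V, x ≠ y → 1 ≤ mu H (x, y) ∧ mu H (x, y) ≤ k) :
    HMChain f k := by
  refine ⟨?_, ?_, ?_⟩
  · intro x y
    by_cases hxy : x = y
    · subst hxy
      exact (hC 1 x x x (by rw [mu_diag]; omega)).1 (by rw [mu_diag]; omega)
    · exact (hC 1 x y y (by rw [mu_diag]; omega)).2 (hmu x y hxy).1
  · intro i hi1 hik x y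
    rcases lt_trichotomy (mu H (x, y)) i with hlt | heq | hgt
    · rw [(hC i x x y hlt).1 hlt,
        (hC (i + 1) x y y (by rw [mu_diag]; omega)).1 (by omega)]
    · rw [(hB i x x y heq).1 (Or.inr ⟨heq, not_idist hi1 x y⟩),
        (hC (i + 1) x y y (by rw [mu_diag]; omega)).1 (by omega)]
    · rw [(hA i x x y hgt).1 (by rw [mu_diag]; omega),
        (hC (i + 1) x y y (by rw [mu_diag]; omega)).2 (by omega)]
  · intro x y
    by_cases hxy : x = y
    · subst hxy
      rcases Nat.eq_zero_or_pos k with hk | hk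
      · subst hk
        by_cases hd : IDist H 0 x x x
        · exact (hB 0 x x x (mu_diag H x)).2 (Or.inr ⟨mu_diag H x, hd⟩)
        · exact (hB 0 x x x (mu_diag H x)).1 (Or.inr ⟨mu_diag H x, hd⟩)
      · exact (hC k x x x (by rw [mu_diag]; omega)).1 (by rw [mu_diag]; omega)
    · obtain ⟨h1, h2⟩ := hmu x y hxy
      rcases eq_or_lt_of_le h2 with heq | hlt
      · exact (hB k x x y heq).1 (Or.inr ⟨heq, not_idist (by omega) x y⟩)
      · exact (hC k x x y hlt).1 hlt

end DigraphListHom
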